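/- arXiv:2401.00841 — 6 statements merged into one kernel-verified Lean document; each statement's English description precedes it below -/
import Mathlib

section
/- Let L be a complete lattice, B a type, and β : B → L a basis. For every monotone map f : L → L, the generator φ_f := {(b, a) : B × L | β b ≤ f a} satisfies Γ_{φ_f}(x) = f(x) for all x : L. -/
/-- Every monotone map `f` on a complete lattice with basis `β` arises as
`Γ_{φ_f}` for the canonical generator `φ_f = {(b, a) | β b ≤ f a}`. -/
theorem gamma_of_canonical_generator {L : Type*} [CompleteLattice L] {B : Type*}
    (β : B → L) (hβ : ∀ x : L, x = sSup (β '' {b : B | β b ≤ x}))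
    (f : L → L) (hf : Monotone f) :
    ∀ x : L,
      sSup (β '' {b : B | ∃ a' : L, (b, a') ∈ {p : B × L | β p.1 ≤ f p.2} ∧ a' ≤ x})
        = f x := by
  intro x
  apply le_antisymm
  · apply sSup_le
    rintro _ ⟨b, ⟨a', hba, hax⟩, rfl⟩
    exact hba.trans (hf hax)
  · nth_rewrite 1 [hβ (f x)]
    apply sSup_le_sSup
    rintro _ ⟨b, hb, rfl⟩
    exact ⟨b, ⟨x, hb, le_rfl⟩, rfl⟩
end

section
/- Let L be a complete lattice, B a type, β : B → L a basis, and φ ⊆ B × L a generator. If P ⊆ B is c-closed and φ-closed, then sSup (β '' P) is deflationary: Γ_φ (sSup (β '' P)) ≤ sSup (β '' P). -/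
/-- `P` is closed under containment. -/
def IsCClosed {L B : Type*} [CompleteLattice L] (β : B → L) (P : Set B) : Prop :=
  ∀ U : Set B, U ⊆ P → ∀ b : B, β b ≤ sSup (β '' U) → b ∈ P

/-- `P` is closed under the generator `φ`. -/
def IsPhiClosed {L B : Type*} [CompleteLattice L] (β : B → L) (φ : Set (B × L))
    (P : Set B) : Prop :=
  ∀ b : B, ∀ a : L, (b, a) ∈ φ → {b' : B | β b' ≤ a} ⊆ P → b ∈ P

/-- If `P` is c-closed and φ-closed then `sSup (β '' P)` is deflationary. -/
theorem sSup_of_closed_is_deflationary {L B : Type*} [CompleteLattice L] (β : B → L)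
    (hβ : ∀ x : L, x = sSup (β '' {b : B | β b ≤ x}))
    (φ : Set (B × L)) (P : Set B)
    (hc : IsCClosed β P) (hφ : IsPhiClosed β φ P) :
    sSup (β '' {b : B | ∃ a' : L, (b, a') ∈ φ ∧ a' ≤ sSup (β '' P)}) ≤ sSup (β '' P) := by
  apply sSup_le
  rintro _ ⟨b, ⟨a', hfa, ha⟩, rfl⟩
  apply le_sSup
  refine Set.mem_image_of_mem β (hφ b a' hfa ?_)
  intro b' hb'
  exact hc P (le_refl _) b' (le_trans hb' ha)
end

section
/- Let L be a complete lattice, B a type, β : B → L a basis, and φ ⊆ B × L a generator. If a : L is deflationary, i.e. Γ_φ(a) ≤ a, then the subset {b : B | β b ≤ a} is both c-closed and φ-closed. -/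
/-- If `a` is deflationary, i.e. `Γ_φ a ≤ a`, then `{b | β b ≤ a}` is
c-closed and φ-closed. -/
theorem downset_of_deflationary_is_closed {L B : Type*} [CompleteLattice L] (β : B → L)
    (hβ : ∀ x : L, x = sSup (β '' {b : B | β b ≤ x}))
    (φ : Set (B × L)) (a : L)
    (ha : sSup (β '' {b : B | ∃ a' : L, (b, a') ∈ φ ∧ a' ≤ a}) ≤ a) :
    IsCClosed β {b : B | β b ≤ a} ∧ IsPhiClosed β φ {b : B | β b ≤ a} := by
  constructor
  · intro U hU b hb
    refine hb.trans (sSup_le ?_)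
    rintro _ ⟨b', hb', rfl⟩
    exact hU hb'
  · intro b a' hmem hsub
    have ha' : a' ≤ a := by
      rw [hβ a']
      refine sSup_le ?_
      rintro _ ⟨b', hb', rfl⟩
      exact hsub hb'
    refine le_trans ?_ ha
    exact le_sSup ⟨b, ⟨a', hmem, ha'⟩, rfl⟩
end

section
/- Let L be a complete lattice, B a type, β : B → L a basis, and φ ⊆ B × L a generator. Then there is an equivalence (bijection) between the type of subsets P ⊆ B that are both c-closed and φ-closed and the type of deflationary points {a : L | Γ_φ(a) ≤ a}, given by P ↦ sSup (β '' P) with inverse a ↦ {b : B | β b ≤ a}. -/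
/-- The c-φ-closed subsets of `B` correspond to the deflationary points of
`Γ_φ`, via `P ↦ sSup (β '' P)` with inverse `a ↦ {b | β b ≤ a}`. -/
theorem closed_subsets_equiv_deflationary {L B : Type*} [CompleteLattice L] (β : B → L)
    (hβ : ∀ x : L, x = sSup (β '' {b : B | β b ≤ x}))
    (φ : Set (B × L)) :
    ∃ e : {P : Set B // IsCClosed β P ∧ IsPhiClosed β φ P} ≃
        {a : L // sSup (β '' {b : B | ∃ a' : L, (b, a') ∈ φ ∧ a' ≤ a}) ≤ a},
      (∀ P, (e P).1 = sSup (β '' P.1)) ∧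
      (∀ a, (e.symm a).1 = {b : B | β b ≤ a.1}) := by
  -- forward map well-defined
  have hfwd : ∀ P : {P : Set B // IsCClosed β P ∧ IsPhiClosed β φ P},
      sSup (β '' {b : B | ∃ a' : L, (b, a') ∈ φ ∧ a' ≤ sSup (β '' P.1)}) ≤ sSup (β '' P.1) := by
    rintro ⟨P, hc, hφ⟩
    apply sSup_le
    rintro x ⟨b, ⟨a', ha', hle⟩, rfl⟩
    apply le_sSup
    refine ⟨b, ?_, rfl⟩
    apply hφ b a' ha'
    intro b' hb'
    exact hc P (fun _ h => h) b' (le_trans hb' hle)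
  have hbwd : ∀ a : {a : L // sSup (β '' {b : B | ∃ a' : L, (b, a') ∈ φ ∧ a' ≤ a}) ≤ a},
      IsCClosed β {b : B | β b ≤ a.1} ∧ IsPhiClosed β φ {b : B | β b ≤ a.1} := by
    rintro ⟨a, ha⟩
    constructor
    · intro U hU b hb
      refine le_trans hb (sSup_le ?_)
      rintro x ⟨b', hb', rfl⟩
      exact hU hb'
    · intro b a' hmem hsub
      have ha' : a' ≤ a := by
        rw [hβ a']
        apply sSup_le
        rintro x ⟨b', hb', rfl⟩
        exact hsub hb'
      refine le_trans ?_ ha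
      exact le_sSup ⟨b, ⟨a', hmem, ha'⟩, rfl⟩
  refine ⟨⟨fun P => ⟨sSup (β '' P.1), hfwd P⟩,
    fun a => ⟨{b : B | β b ≤ a.1}, hbwd a⟩, ?_, ?_⟩, fun P => rfl, fun a => rfl⟩
  · rintro ⟨P, hc, hφ⟩
    ext b
    simp only [Set.mem_setOf_eq]
    constructor
    · intro hb
      exact hc P (fun _ h => h) b hb
    · intro hb
      exact le_sSup ⟨b, hb, rfl⟩
  · rintro ⟨a, ha⟩
    ext
    exact (hβ a).symm
end

section
/- Let L be a complete lattice, B a type, β : B → L a basis, and φ ⊆ B × L a generator that is bounded with bound given by a type I and a family α : I → Type. Then for all b : B and a : L: (∃ a' : L, (b, a') ∈ φ ∧ a' ≤ a) if and only if (∃ i : I, ∃ m : α i → {b' : B // β b' ≤ a}, (b, ⨆ z : α i, β (m z).1) ∈ φ). -/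
/-- For a bounded generator `φ` with bound `(I, α)`, membership in
`S_{φ,a}` can be expressed in small terms. -/
theorem bounded_generator_small_characterization {L B : Type*} [CompleteLattice L]
    (β : B → L) (hβ : ∀ x : L, x = sSup (β '' {b : B | β b ≤ x}))
    (φ : Set (B × L)) {I : Type*} (α : I → Type*)
    (hbound : ∀ (b : B) (a : L), (b, a) ∈ φ →
      ∃ i : I, ∃ s : α i → {b' : B // β b' ≤ a}, Function.Surjective s) :
    ∀ (b : B) (a : L),
      (∃ a' : L, (b, a') ∈ φ ∧ a' ≤ a) ↔
      (∃ i : I, ∃ m : α i → {b' : B // β b' ≤ a},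
        (b, ⨆ z : α i, β (m z).1) ∈ φ) := by
  intro b a
  constructor
  · rintro ⟨a', hφ, hle⟩
    obtain ⟨i, s, hs⟩ := hbound b a' hφ
    have key : (⨆ z : α i, β (s z).1) = a' := by
      apply le_antisymm
      · exact iSup_le fun z => (s z).2
      · conv_lhs => rw [hβ a']
        apply sSup_le
        rintro x ⟨b', hb', rfl⟩
        obtain ⟨z, hz⟩ := hs ⟨b', hb'⟩
        exact le_iSup_of_le z (by rw [hz])
    refine ⟨i, fun z => ⟨(s z).1, le_trans (s z).2 hle⟩, ?_⟩
    simpa [key] using hφ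
  · rintro ⟨i, m, hφ⟩
    exact ⟨_, hφ, iSup_le fun z => (m z).2⟩
end

section
/- Let L be a complete lattice, B a type, β : B → L a basis admitting a presentation (J, Y, R), and φ ⊆ B × L a generator bounded with bound (I, α). Let I_φ be the intersection of all subsets of B that are c-closed and φ-closed, and let I_φ^V be the intersection of all subsets P ⊆ B satisfying: (i) for every j : J, if Y j ⊆ P then R_j ⊆ P; and (ii) for every b : B, i : I and m : α i → B, if (b, ⨆ z : α i, β (m z)) ∈ φ and {b' : B | β b' ≤ ⨆ z : α i, β (m z)} ⊆ P, then b ∈ P. Then I_φ = I_φ^V. -/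
/-- With a presentation `(J, Y, R)` of `L` and a bound `(I, α)` for `φ`,
the least c-φ-closed subset `I_φ` coincides with its small version `I_φ^V`. -/
theorem least_closed_subset_eq_small_version {L B : Type*} [CompleteLattice L]
    (β : B → L) (hβ : ∀ x : L, x = sSup (β '' {b : B | β b ≤ x}))
    {J : Type*} (Y : J → Set B) (R : Set (B × Set B))
    (hpres : ∀ (b : B) (X : Set B),
      β b ≤ sSup (β '' X) ↔ ∃ j : J, Y j ⊆ X ∧ (b, Y j) ∈ R)
    (φ : Set (B × L)) {I : Type*} (α : I → Type*)
    (hbound : ∀ (b : B) (a : L), (b, a) ∈ φ →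
      ∃ i : I, ∃ s : α i → {b' : B // β b' ≤ a}, Function.Surjective s) :
    ⋂₀ {P : Set B | IsCClosed β P ∧ IsPhiClosed β φ P} =
    ⋂₀ {P : Set B |
      (∀ j : J, Y j ⊆ P → {b : B | (b, Y j) ∈ R} ⊆ P) ∧
      (∀ (b : B) (i : I) (m : α i → B),
        (b, ⨆ z : α i, β (m z)) ∈ φ →
        {b' : B | β b' ≤ ⨆ z : α i, β (m z)} ⊆ P → b ∈ P)} := by
  have key : {P : Set B | IsCClosed β P ∧ IsPhiClosed β φ P} =
    {P : Set B |
      (∀ j : J, Y j ⊆ P → {b : B | (b, Y j) ∈ R} ⊆ P) ∧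
      (∀ (b : B) (i : I) (m : α i → B),
        (b, ⨆ z : α i, β (m z)) ∈ φ →
        {b' : B | β b' ≤ ⨆ z : α i, β (m z)} ⊆ P → b ∈ P)} := by
    ext P
    simp only [Set.mem_setOf_eq]
    constructor
    · rintro ⟨hc, hφ⟩
      refine ⟨fun j hYj b hb => hc (Y j) hYj b ((hpres b (Y j)).2 ⟨j, le_refl _, hb⟩),
        fun b i m hmem hsub => hφ b _ hmem hsub⟩
    · rintro ⟨h1, h2⟩
      constructor
      · intro U hU b hb
        obtain ⟨j, hYU, hR⟩ := (hpres b U).1 hb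
        exact h1 j (hYU.trans hU) hR
      · intro b a hmem hsub
        obtain ⟨i, s, hs⟩ := hbound b a hmem
        set m : α i → B := fun z => (s z).1 with hm
        have ha : a = ⨆ z : α i, β (m z) := by
          have h1' : β '' {b' : B | β b' ≤ a} = Set.range (fun z => β (m z)) := by
            ext x
            constructor
            · rintro ⟨b', hb', rfl⟩
              obtain ⟨z, hz⟩ := hs ⟨b', hb'⟩
              exact ⟨z, by rw [hm]; simp [hz]⟩
            · rintro ⟨z, rfl⟩
              exact ⟨m z, (s z).2, rfl⟩
          rw [hβ a, h1', iSup]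
        rw [ha] at hmem hsub
        exact h2 b i m hmem hsub

  rw [key]
end
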